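/- Let D be a Young diagram fitting below the diagonal of the P \times Q rectangle (P = Kp, Q = Kq, p,q coprime positive, K positive). For a box c \in D, let n_c be the northward boundary-path edge in the row of c and e_c the westward boundary-path edge in the column of c, and label each boundary vertex by (number of westward edges before it)·q minus (number of northward edges before it)·p, starting from the southeast corner of R_{P,Q} with label 0. If e_c enters vertex labeled v and n_c enters vertex labeled w, then v = w + (a(c)+1)·q - l(c)·p. In particular v = w iff p·l(c) = q·(a(c)+1), and v < w iff p·l(c) > q·(a(c)+1). -/
import Mathlib


/-- A Young diagram: a finite down-closed subset of ℕ². -/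
def IsYoung (D : Finset (ℕ × ℕ)) : Prop :=
  ∀ x y x' y', (x, y) ∈ D → x' ≤ x → y' ≤ y → (x', y') ∈ D

/-- Arm length of a box inside the diagram. -/
def arm (D : Finset (ℕ × ℕ)) (c : ℕ × ℕ) : ℕ :=
  (D.filter fun d => d.2 = c.2 ∧ c.1 < d.1).card

/-- Leg length of a box inside the diagram. -/
def leg (D : Finset (ℕ × ℕ)) (c : ℕ × ℕ) : ℕ :=
  (D.filter fun d => d.1 = c.1 ∧ c.2 < d.2).card

/-- Arm length of a box in the complement of the diagram. -/
def coArm (D : Finset (ℕ × ℕ)) (c : ℕ × ℕ) : ℕ :=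
  ((Finset.range c.1).filter fun x' => (x', c.2) ∉ D).card

/-- Leg length of a box in the complement of the diagram. -/
def coLeg (D : Finset (ℕ × ℕ)) (c : ℕ × ℕ) : ℕ :=
  ((Finset.range c.2).filter fun y' => (c.1, y') ∉ D).card

/-- Length of column x of the diagram. -/
def colLen (D : Finset (ℕ × ℕ)) (x : ℕ) : ℕ := (D.filter fun c => c.1 = x).card

/-- Length of row y of the diagram. -/
def rowLen (D : Finset (ℕ × ℕ)) (y : ℕ) : ℕ := (D.filter fun c => c.2 = y).card

/-- Label of the endpoint of the westward boundary edge in column x.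
The boundary path starts at the southeast corner (P,0) with label 0, each
westward step adds q and each northward step subtracts p; the westward edge in
column x ends at the point (x, colLen D x). -/
def wlabel (D : Finset (ℕ × ℕ)) (p q P : ℕ) (x : ℕ) : ℤ :=
  ((P : ℤ) - x) * q - (colLen D x : ℤ) * p

/-- Label of the endpoint of the northward boundary edge in row y: it ends at
the point (rowLen D y, y+1). -/
def nlabel (D : Finset (ℕ × ℕ)) (p q P : ℕ) (y : ℕ) : ℤ :=
  ((P : ℤ) - rowLen D y) * q - ((y : ℤ) + 1) * p

/-- Number of westward boundary edges entering a vertex labeled v. -/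
def Win (D : Finset (ℕ × ℕ)) (p q P : ℕ) (v : ℤ) : ℕ :=
  ((Finset.range P).filter fun x => wlabel D p q P x = v).card

/-- Number of northward boundary edges entering a vertex labeled v. -/
def Nin (D : Finset (ℕ × ℕ)) (p q P Q : ℕ) (v : ℤ) : ℕ :=
  ((Finset.range Q).filter fun y => nlabel D p q P y = v).card

/-- The set of labels of vertices of the boundary graph M(D). -/
def labels (D : Finset (ℕ × ℕ)) (p q P Q : ℕ) : Finset ℤ :=
  ((Finset.range P).image (wlabel D p q P)) ∪ ((Finset.range Q).image (nlabel D p q P))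


lemma mem_iff_lt_card (S : Finset ℕ) (h : ∀ x ∈ S, ∀ x' ≤ x, x' ∈ S) (x : ℕ) :
    x ∈ S ↔ x < S.card := by
  constructor
  · intro hx
    have hsub : Finset.range (x + 1) ⊆ S := by
      intro y hy
      exact h x hx y (by simpa using Nat.lt_succ_iff.mp (Finset.mem_range.mp hy))
    have := Finset.card_le_card hsub
    simpa using this
  · intro hx
    by_contra hxn
    have hsub : S ⊆ Finset.range x := by
      intro s hs
      rw [Finset.mem_range]
      by_contra hsx
      exact hxn (h s hs x (by omega))
    have := Finset.card_le_card hsub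
    simp at this
    omega

lemma mem_iff_lt_rowLen (D : Finset (ℕ × ℕ)) (hD : IsYoung D) (x y : ℕ) :
    (x, y) ∈ D ↔ x < rowLen D y := by
  have hcard : ((D.filter fun d => d.2 = y).image Prod.fst).card = rowLen D y := by
    rw [rowLen]
    apply Finset.card_image_of_injOn
    intro a ha b hb hab
    simp [Finset.mem_filter] at ha hb
    exact Prod.ext hab (ha.2.trans hb.2.symm)
  have hmem : ∀ z, z ∈ (D.filter fun d => d.2 = y).image Prod.fst ↔ (z, y) ∈ D := by
    intro z
    simp only [Finset.mem_image, Finset.mem_filter]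
    constructor
    · rintro ⟨⟨a, b⟩, ⟨hd, rfl⟩, rfl⟩
      exact hd
    · intro hz; exact ⟨(z, y), ⟨hz, rfl⟩, rfl⟩
  rw [← hcard, ← hmem x]
  apply mem_iff_lt_card
  intro a ha a' ha'
  rw [hmem] at ha ⊢
  exact hD a y a' y ha ha' le_rfl

lemma mem_iff_lt_colLen (D : Finset (ℕ × ℕ)) (hD : IsYoung D) (x y : ℕ) :
    (x, y) ∈ D ↔ y < colLen D x := by
  have hcard : ((D.filter fun d => d.1 = x).image Prod.snd).card = colLen D x := by
    rw [colLen]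
    apply Finset.card_image_of_injOn
    intro a ha b hb hab
    simp [Finset.mem_filter] at ha hb
    exact Prod.ext (ha.2.trans hb.2.symm) hab
  have hmem : ∀ z, z ∈ (D.filter fun d => d.1 = x).image Prod.snd ↔ (x, z) ∈ D := by
    intro z
    simp only [Finset.mem_image, Finset.mem_filter]
    constructor
    · rintro ⟨⟨a, b⟩, ⟨hd, rfl⟩, rfl⟩
      exact hd
    · intro hz; exact ⟨(x, z), ⟨hz, rfl⟩, rfl⟩
  rw [← hcard, ← hmem y]
  apply mem_iff_lt_card
  intro a ha a' ha'
  rw [hmem] at ha ⊢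
  exact hD x a x a' ha le_rfl ha'

lemma rowLen_eq_arm (D : Finset (ℕ × ℕ)) (hD : IsYoung D) (c : ℕ × ℕ) (hc : c ∈ D) :
    rowLen D c.2 = c.1 + arm D c + 1 := by
  have hlt : c.1 < rowLen D c.2 := by
    rw [← mem_iff_lt_rowLen D hD]; exact hc
  have hset : (D.filter fun d => d.2 = c.2 ∧ c.1 < d.1)
      = (Finset.Ico (c.1 + 1) (rowLen D c.2)).image (fun x => (x, c.2)) := by
    ext ⟨a, b⟩
    simp only [Finset.mem_image, Finset.mem_filter, Finset.mem_Ico]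
    constructor
    · rintro ⟨hd, rfl, hlt'⟩
      exact ⟨a, ⟨by omega, (mem_iff_lt_rowLen D hD a c.2).mp hd⟩, rfl⟩
    · rintro ⟨x, ⟨hx1, hx2⟩, h⟩
      obtain ⟨rfl, rfl⟩ := Prod.mk.injEq .. ▸ h
      exact ⟨(mem_iff_lt_rowLen D hD x c.2).mpr hx2, rfl, by omega⟩
  rw [arm, hset, Finset.card_image_of_injOn
    (by intro a _ b _ hab; exact congrArg Prod.fst hab), Nat.card_Ico]
  omega

lemma colLen_eq_leg (D : Finset (ℕ × ℕ)) (hD : IsYoung D) (c : ℕ × ℕ) (hc : c ∈ D) :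
    colLen D c.1 = c.2 + leg D c + 1 := by
  have hlt : c.2 < colLen D c.1 := by
    rw [← mem_iff_lt_colLen D hD]; exact hc
  have hset : (D.filter fun d => d.1 = c.1 ∧ c.2 < d.2)
      = (Finset.Ico (c.2 + 1) (colLen D c.1)).image (fun y => (c.1, y)) := by
    ext ⟨a, b⟩
    simp only [Finset.mem_image, Finset.mem_filter, Finset.mem_Ico]
    constructor
    · rintro ⟨hd, rfl, hlt'⟩
      exact ⟨b, ⟨by omega, (mem_iff_lt_colLen D hD c.1 b).mp hd⟩, rfl⟩
    · rintro ⟨y, ⟨hy1, hy2⟩, h⟩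
      obtain ⟨rfl, rfl⟩ := Prod.mk.injEq .. ▸ h
      exact ⟨(mem_iff_lt_colLen D hD c.1 y).mpr hy2, rfl, by omega⟩
  rw [leg, hset, Finset.card_image_of_injOn
    (by intro a _ b _ hab; exact congrArg Prod.snd hab), Nat.card_Ico]
  omega

theorem slope_to_edges_inside (D : Finset (ℕ × ℕ)) (hD : IsYoung D)
    (p q K : ℕ) (hp : 0 < p) (hq : 0 < q) (hK : 0 < K) (hpq : Nat.Coprime p q)
    (hdiag : ∀ c ∈ D, q * c.1 + p * c.2 + p + q ≤ K * p * q)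
    (c : ℕ × ℕ) (hc : c ∈ D) :
    wlabel D p q (K * p) c.1
        = nlabel D p q (K * p) c.2 + ((arm D c : ℤ) + 1) * q - (leg D c : ℤ) * p ∧
    (wlabel D p q (K * p) c.1 = nlabel D p q (K * p) c.2
        ↔ p * leg D c = q * (arm D c + 1)) ∧
    (wlabel D p q (K * p) c.1 < nlabel D p q (K * p) c.2
        ↔ q * (arm D c + 1) < p * leg D c) := by
  have h1 := rowLen_eq_arm D hD c hc
  have h2 := colLen_eq_leg D hD c hc
  have E : wlabel D p q (K * p) c.1
      = nlabel D p q (K * p) c.2 + ((arm D c : ℤ) + 1) * q - (leg D c : ℤ) * p := by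
    rw [wlabel, nlabel, h1, h2]
    push_cast
    ring
  refine ⟨E, ?_, ?_⟩
  · rw [E]
    constructor
    · intro h
      have hAB : ((arm D c : ℤ) + 1) * q = (leg D c : ℤ) * p := by linarith
      zify
      linear_combination -hAB
    · intro h
      have h' : (p : ℤ) * leg D c = q * (arm D c + 1) := by exact_mod_cast h
      linear_combination -h'
  · rw [E]
    constructor
    · intro h
      have hAB : ((arm D c : ℤ) + 1) * q < (leg D c : ℤ) * p := by linarith
      zify
      ring_nf at hAB ⊢
      linarith
    · intro h
      have h' : (q : ℤ) * (arm D c + 1) < p * leg D c := by exact_mod_cast h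
      ring_nf at h' ⊢
      linarith
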